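/- The fair barycenter score m* defined by group-wise convex combinations of the original score and its transported counterpart satisfies the strong demographic parity property: the conditional distribution of m*(X,S) given S = A equals the conditional distribution given S = B. -/

import Mathlib

open MeasureTheory ProbabilityTheory Set

/-- Cumulative distribution function of a measure on `ℝ`. -/
noncomputable def cdf' (p : Measure ℝ) (x : ℝ) : ℝ := (p (Iic x)).toReal

/-- Generalized inverse (quantile function) of a cdf. -/
noncomputable def quantile' (p : Measure ℝ) (u : ℝ) : ℝ := sInf {x : ℝ | u ≤ cdf' p x}

open Filter Topology

section AuxFair

variable (ν : Measure ℝ) [IsProbabilityMeasure ν]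

lemma cdf'_le_one (x : ℝ) : cdf' ν x ≤ 1 := by
  have h := ENNReal.toReal_mono (measure_ne_top ν univ) (measure_mono (subset_univ (Iic x)))
  simpa [cdf'] using h

lemma cdf'_nonneg (x : ℝ) : 0 ≤ cdf' ν x := ENNReal.toReal_nonneg

lemma cdf'_pos {ν} [IsProbabilityMeasure ν] (hm : StrictMono (cdf' ν)) (x : ℝ) :
    0 < cdf' ν x :=
  lt_of_le_of_lt (cdf'_nonneg ν (x - 1)) (hm (by linarith))

lemma cdf'_lt_one {ν} [IsProbabilityMeasure ν] (hm : StrictMono (cdf' ν)) (x : ℝ) :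
    cdf' ν x < 1 :=
  lt_of_lt_of_le (hm (lt_add_one x)) (cdf'_le_one ν (x + 1))

lemma tendsto_cdf'_atTop : Tendsto (cdf' ν) atTop (𝓝 1) := by
  have h := (ENNReal.tendsto_toReal (measure_ne_top ν univ)).comp
    (tendsto_measure_Iic_atTop ν)
  exact (by simpa using h : Tendsto (ENNReal.toReal ∘ fun x => ν (Iic x)) atTop (𝓝 1))

lemma tendsto_cdf'_atBot : Tendsto (cdf' ν) atBot (𝓝 0) := by
  have h2 : (⋂ x : ℝ, Iic x) = (∅ : Set ℝ) := by
    ext y; simp only [mem_iInter, mem_Iic, mem_empty_iff_false, iff_false, not_forall]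
    exact ⟨y - 1, by push_neg; linarith⟩
  have h := tendsto_measure_iInter_atBot (μ := ν) (s := Iic)
    (fun i => nullMeasurableSet_Iic) monotone_Iic ⟨0, measure_ne_top _ _⟩
  rw [h2] at h
  have h3 := (ENNReal.tendsto_toReal (by simp : (ν (∅ : Set ℝ)) ≠ ⊤)).comp h
  exact (by simpa using h3 : Tendsto (ENNReal.toReal ∘ ν ∘ Iic) atBot (𝓝 0))

lemma exists_cdf'_eq {ν : Measure ℝ} [IsProbabilityMeasure ν] (hc : Continuous (cdf' ν))
    (hm : StrictMono (cdf' ν)) {u : ℝ} (hu0 : 0 < u) (hu1 : u < 1) : ∃ x, cdf' ν x = u := by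
  obtain ⟨a, ha⟩ := ((tendsto_cdf'_atBot ν).eventually (Iio_mem_nhds hu0)).exists
  obtain ⟨b, hb⟩ := ((tendsto_cdf'_atTop ν).eventually (Ioi_mem_nhds hu1)).exists
  have ha' : cdf' ν a < u := ha
  have hb' : u < cdf' ν b := hb
  have hab : a ≤ b := le_of_lt (hm.lt_iff_lt.mp (lt_trans ha' hb'))
  have := intermediate_value_Icc hab hc.continuousOn
  obtain ⟨x, -, hx⟩ := this ⟨ha'.le, hb'.le⟩
  exact ⟨x, hx⟩

lemma quantile'_cdf' {ν : Measure ℝ} (hm : StrictMono (cdf' ν)) (x : ℝ) :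
    quantile' ν (cdf' ν x) = x := by
  have : {y : ℝ | cdf' ν x ≤ cdf' ν y} = Ici x := by
    ext y; simp [hm.le_iff_le]
  rw [quantile', this, csInf_Ici]

lemma cdf'_quantile' {ν : Measure ℝ} [IsProbabilityMeasure ν] (hc : Continuous (cdf' ν))
    (hm : StrictMono (cdf' ν)) {u : ℝ} (hu0 : 0 < u) (hu1 : u < 1) :
    cdf' ν (quantile' ν u) = u := by
  obtain ⟨x, hx⟩ := exists_cdf'_eq hc hm hu0 hu1
  rw [← hx, quantile'_cdf' hm]

end AuxFair

/-- The fair barycenter score satisfies strong demographic parity: its conditional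
distributions given the two groups coincide. -/
theorem fair_barycenter_strong_demographic_parity
    {Ω : Type*} [MeasurableSpace Ω] (μ : Measure Ω) [IsProbabilityMeasure μ]
    (S : Ω → Bool) (hS : Measurable S)
    (m : Ω → ℝ) (hm : Measurable m)
    (hA : 0 < μ {ω | S ω = true}) (hB : 0 < μ {ω | S ω = false})
    (hFAc : Continuous (cdf' ((μ[|{ω | S ω = true}]).map m)))
    (hFAm : StrictMono (cdf' ((μ[|{ω | S ω = true}]).map m)))
    (hFBc : Continuous (cdf' ((μ[|{ω | S ω = false}]).map m)))
    (hFBm : StrictMono (cdf' ((μ[|{ω | S ω = false}]).map m))) :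
    (μ[|{ω | S ω = true}]).map (fun ω =>
        (μ {ω' | S ω' = true}).toReal * m ω +
        (μ {ω' | S ω' = false}).toReal *
          quantile' ((μ[|{ω | S ω = false}]).map m)
            (cdf' ((μ[|{ω | S ω = true}]).map m) (m ω))) =
      (μ[|{ω | S ω = false}]).map (fun ω =>
        (μ {ω' | S ω' = true}).toReal *
          quantile' ((μ[|{ω | S ω = true}]).map m)
            (cdf' ((μ[|{ω | S ω = false}]).map m) (m ω)) +
        (μ {ω' | S ω' = false}).toReal * m ω) := by
  haveI hPA : IsProbabilityMeasure (μ[|{ω | S ω = true}]) :=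
    cond_isProbabilityMeasure hA.ne'
  haveI hPB : IsProbabilityMeasure (μ[|{ω | S ω = false}]) :=
    cond_isProbabilityMeasure hB.ne'
  set νA : Measure ℝ := (μ[|{ω | S ω = true}]).map m with hνA
  set νB : Measure ℝ := (μ[|{ω | S ω = false}]).map m with hνB
  haveI : IsProbabilityMeasure νA := Measure.isProbabilityMeasure_map hm.aemeasurable
  haveI : IsProbabilityMeasure νB := Measure.isProbabilityMeasure_map hm.aemeasurable
  set wA : ℝ := (μ {ω' | S ω' = true}).toReal with hwA
  set wB : ℝ := (μ {ω' | S ω' = false}).toReal with hwB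
  -- transport maps
  set g : ℝ → ℝ := fun x => quantile' νA (cdf' νB x) with hg
  set h : ℝ → ℝ := fun x => quantile' νB (cdf' νA x) with hh
  have hFAg : ∀ x, cdf' νA (g x) = cdf' νB x := fun x =>
    cdf'_quantile' hFAc hFAm (cdf'_pos hFBm x) (cdf'_lt_one hFBm x)
  have hFBh : ∀ x, cdf' νB (h x) = cdf' νA x := fun x =>
    cdf'_quantile' hFBc hFBm (cdf'_pos hFAm x) (cdf'_lt_one hFAm x)
  have hgmono : StrictMono g := fun x y hxy => by
    have : cdf' νA (g x) < cdf' νA (g y) := by rw [hFAg, hFAg]; exact hFBm hxy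
    exact hFAm.lt_iff_lt.mp this
  have hhmono : StrictMono h := fun x y hxy => by
    have : cdf' νB (h x) < cdf' νB (h y) := by rw [hFBh, hFBh]; exact hFAm hxy
    exact hFBm.lt_iff_lt.mp this
  have hgmeas : Measurable g := hgmono.monotone.measurable
  have hhmeas : Measurable h := hhmono.monotone.measurable
  set φ : ℝ → ℝ := fun x => wA * x + wB * h x with hφ
  set ψ : ℝ → ℝ := fun x => wA * g x + wB * x with hψ
  have hφmeas : Measurable φ :=
    (measurable_const.mul measurable_id).add (measurable_const.mul hhmeas)
  have hψmeas : Measurable ψ :=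
    (measurable_const.mul hgmeas).add (measurable_const.mul measurable_id)
  -- key transport identity
  have hhg : ∀ x, h (g x) = x := fun x => by
    show quantile' νB (cdf' νA (g x)) = x
    rw [hFAg, quantile'_cdf' hFBm]
  have key : νB.map g = νA := by
    haveI : IsProbabilityMeasure (νB.map g) := Measure.isProbabilityMeasure_map hgmeas.aemeasurable
    refine Measure.ext_of_Iic (νB.map g) νA (fun x => ?_)
    rw [Measure.map_apply hgmeas measurableSet_Iic]
    have hpre : g ⁻¹' Iic x = Iic (h x) := by
      ext y
      simp only [mem_preimage, mem_Iic]
      constructor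
      · intro hle
        have : cdf' νA (g y) ≤ cdf' νA x := hFAm.le_iff_le.mpr hle
        rw [hFAg, ← hFBh x] at this
        exact hFBm.le_iff_le.mp this
      · intro hle
        have : cdf' νB y ≤ cdf' νB (h x) := hFBm.le_iff_le.mpr hle
        rw [hFBh, ← hFAg y] at this
        exact hFAm.le_iff_le.mp this
    rw [hpre]
    have : cdf' νB (h x) = cdf' νA x := hFBh x
    exact (ENNReal.toReal_eq_toReal_iff' (measure_ne_top _ _) (measure_ne_top _ _)).mp this
  have hφg : φ ∘ g = ψ := by
    funext x
    simp only [Function.comp, hφ, hψ, hhg x]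
  calc (μ[|{ω | S ω = true}]).map (fun ω => wA * m ω + wB * quantile' νB (cdf' νA (m ω)))
      = (μ[|{ω | S ω = true}]).map (φ ∘ m) := rfl
    _ = νA.map φ := (Measure.map_map hφmeas hm).symm
    _ = (νB.map g).map φ := by rw [key]
    _ = νB.map (φ ∘ g) := Measure.map_map hφmeas hgmeas
    _ = νB.map ψ := by rw [hφg]
    _ = (μ[|{ω | S ω = false}]).map (ψ ∘ m) := Measure.map_map hψmeas hm
    _ = (μ[|{ω | S ω = false}]).map
        (fun ω => wA * quantile' νA (cdf' νB (m ω)) + wB * m ω) := rfl
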